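/- Let ν ∈ ℝ and define A_ν(x,y) := ∑_{n≥0} ₂F₁(−ν−n, −n; −2n; x) · C(2n,n) · y^n as a formal power series in y over ℝ[x]. Then for both choices of sign ε ∈ {+1, −1}, the function f = A_{εν} satisfies the second-order linear ODE (1 − 4y + 2xy + x²y²) f'' + 3(x²y + x − 2) f' + x²(1 − ν²) f = 0, where derivatives are with respect to y. -/

import Mathlib

open Finset PowerSeries

/-- Pochhammer symbol `(a)_k = a(a+1)⋯(a+k-1)`. -/
noncomputable def poch (a : ℝ) (k : ℕ) : ℝ := ∏ i ∈ Finset.range k, (a + i)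

/-- The hypergeometric polynomial `₂F₁(−ν−n, −n; −2n; x) ∈ ℝ[x]`. -/
noncomputable def dihedralCoeff (ν : ℝ) (n : ℕ) : Polynomial ℝ :=
  ∑ k ∈ Finset.range (n + 1),
    Polynomial.C (poch (-ν - n) k * poch (-(n : ℝ)) k /
      (poch (-2 * (n : ℝ)) k * k.factorial)) * Polynomial.X ^ k

/-- `A_ν(x,y) = ∑_{n≥0} ₂F₁(−ν−n, −n; −2n; x) C(2n,n) y^n ∈ ℝ[x]⟦y⟧`. -/
noncomputable def Aseries (ν : ℝ) : PowerSeries (Polynomial ℝ) :=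
  PowerSeries.mk fun n => (((2 * n).choose n : ℝ)) • dihedralCoeff ν n

/-- **The dihedral ODE:** for both `f = A_ν` and `f = A_{−ν}`, one has
`(1 − 4y + 2xy + x²y²) f'' + 3(x²y + x − 2) f' + x²(1 − ν²) f = 0`
as formal power series in `y` over `ℝ[x]`. -/
noncomputable def PP (μ : ℝ) (n : ℕ) : Polynomial ℝ :=
  (((2 * n).choose n : ℝ)) • dihedralCoeff μ n

lemma prod_desc (j k : ℕ) : ∏ i ∈ Finset.range k, (((k : ℝ) + j) - i) = (k + j).factorial / j.factorial := by
  induction k with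
  | zero =>
    have h0 : (j.factorial : ℝ) ≠ 0 := by positivity
    simp [div_self h0]
  | succ k ih =>
    rw [Finset.prod_range_succ']
    push_cast
    have : ∀ i ∈ Finset.range k, ((k:ℝ) + 1 + j - (i + 1)) = ((k:ℝ) + j - i) := by intros; ring
    rw [Finset.prod_congr rfl this, ih]
    rw [show k + 1 + j = (k + j) + 1 by ring, Nat.factorial_succ]
    push_cast
    have h0 : (j.factorial : ℝ) ≠ 0 := by positivity
    field_simp
    ring

lemma coeff_dihedral (μ : ℝ) (n k : ℕ) (h : k ≤ n) :
    (dihedralCoeff μ n).coeff k =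
      poch (-μ - n) k * poch (-(n : ℝ)) k / (poch (-2 * (n : ℝ)) k * k.factorial) := by
  rw [dihedralCoeff, Polynomial.finset_sum_coeff]
  simp only [Polynomial.coeff_C_mul, Polynomial.coeff_X_pow]
  rw [Finset.sum_eq_single k]
  · simp
  · intro b _ hb
    rw [if_neg (by omega)]
    ring
  · intro hk; exact absurd (Finset.mem_range.2 (Nat.lt_succ_of_le h)) hk

lemma coeff_dihedral_zero (μ : ℝ) (n k : ℕ) (h : n < k) :
    (dihedralCoeff μ n).coeff k = 0 := by
  rw [dihedralCoeff, Polynomial.finset_sum_coeff]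
  apply Finset.sum_eq_zero
  intro b hb
  simp only [Polynomial.coeff_C_mul, Polynomial.coeff_X_pow]
  have : k ≠ b := by have := Finset.mem_range.1 hb; omega
  rw [if_neg this]
  ring

lemma poch_neg_eval (j k : ℕ) : poch (-((k + j : ℕ) : ℝ)) k
    = (-1)^k * ((k + j).factorial / j.factorial) := by
  rw [poch]
  have h : ∀ i ∈ Finset.range k, (-((k + j : ℕ) : ℝ) + i) = (-1) * (((k : ℝ) + j) - i) := by
    intro i _; push_cast; ring
  rw [Finset.prod_congr rfl h, Finset.prod_mul_distrib, Finset.prod_const, card_range, prod_desc]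

lemma poch_neg_shift (a : ℝ) (k : ℕ) : poch (-a) k = (-1)^k * ∏ i ∈ Finset.range k, (a - i) := by
  rw [poch]
  have h : ∀ i ∈ Finset.range k, (-a + i) = (-1) * (a - i) := by intro i _; ring
  rw [Finset.prod_congr rfl h, Finset.prod_mul_distrib, Finset.prod_const, card_range]

lemma coeff_PP (μ : ℝ) (k j : ℕ) :
    (PP μ (k + j)).coeff k = (-1)^k * (∏ i ∈ Finset.range k, (μ + ((k + j : ℕ) : ℝ) - i)) *
      ((k + 2*j).factorial / ((k + j).factorial * j.factorial * k.factorial)) := by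
  rw [PP, Polynomial.coeff_smul, smul_eq_mul, coeff_dihedral μ (k+j) k (by omega)]
  have e1 : -μ - ((k + j : ℕ) : ℝ) = -(μ + ((k + j : ℕ) : ℝ)) := by ring
  rw [e1, poch_neg_shift, poch_neg_eval j k]
  have e2 : (-2 * (((k + j : ℕ)) : ℝ)) = -(((k + (k + 2*j) : ℕ)) : ℝ) := by push_cast; ring
  rw [e2, poch_neg_eval (k + 2*j) k]
  have e3 : k + (k + 2*j) = 2*(k + j) := by omega
  rw [e3]
  rw [Nat.cast_choose ℝ (show k + j ≤ 2*(k+j) by omega)]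
  have e4 : 2*(k+j) - (k+j) = k + j := by omega
  rw [e4]
  have f1 : ((2*(k+j)).factorial : ℝ) ≠ 0 := by positivity
  have f2 : ((k+j).factorial : ℝ) ≠ 0 := by positivity
  have f3 : (j.factorial : ℝ) ≠ 0 := by positivity
  have f4 : ((k+2*j).factorial : ℝ) ≠ 0 := by positivity
  have f5 : (k.factorial : ℝ) ≠ 0 := by positivity
  have f6 : ((-1 : ℝ))^k ≠ 0 := by positivity
  field_simp

noncomputable def Q (a : ℝ) (m : ℕ) : ℝ := ∏ i ∈ Finset.range m, (a - i)

@[simp] lemma Q_zero (a : ℝ) : Q a 0 = 1 := by simp [Q]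

@[simp] lemma Q_one (a : ℝ) : Q a 1 = a := by simp [Q]

lemma Q_split1 (a b : ℝ) (m : ℕ) (h : b = a - 1) : Q a (m+1) = a * Q b m := by
  rw [Q, Q, Finset.prod_range_succ']
  have h2 : ∀ i ∈ Finset.range m, (a - ((i : ℕ) + 1 : ℕ)) = (b - i) := by
    intro i _; rw [h]; push_cast; ring
  rw [Finset.prod_congr rfl h2]
  push_cast
  ring

lemma Q_split2 (a b : ℝ) (m : ℕ) (h : b = a - 2) : Q a (m+1+1) = a * (a-1) * Q b m := by
  rw [Q_split1 a (a-1) (m+1) rfl, Q_split1 (a-1) b m (by rw [h]; ring)]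
  ring

lemma Q_mid (a b : ℝ) (m : ℕ) (h : b = a - 1) : Q a (m+1+1) = a * Q b m * (b - m) := by
  rw [Q_split1 a b (m+1) h, Q, Finset.prod_range_succ, ← Q]
  ring

lemma coeff_PPQ (μ : ℝ) (k j : ℕ) :
    (PP μ (k + j)).coeff k = (-1)^k * Q (μ + k + j) k *
      ((k + 2*j).factorial / ((k + j).factorial * j.factorial * k.factorial)) := by
  rw [coeff_PP]
  have h2 : ∀ i ∈ Finset.range k, (μ + ((k + j : ℕ) : ℝ) - i) = ((μ + k + j) - i) := by
    intro i _; push_cast; ring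
  rw [Q, Finset.prod_congr rfl h2]

lemma coeff_PP_zero (μ : ℝ) (n k : ℕ) (h : n < k) : (PP μ n).coeff k = 0 := by
  rw [PP, Polynomial.coeff_smul, coeff_dihedral_zero μ n k h, smul_zero]

lemma fs (a : ℕ) : (((a+1).factorial : ℕ) : ℝ) = ((a : ℝ) + 1) * a.factorial := by
  rw [Nat.factorial_succ]; push_cast; ring

lemma coeff_PP_eq (μ : ℝ) (N k j : ℕ) (hN : N = k + j)
    (s q F1 F2 F3 F4 : ℝ)
    (hs : ((-1:ℝ))^k = s)
    (hq : Q (μ + k + j) k = q)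
    (h1 : (((k + 2*j).factorial : ℕ) : ℝ) = F1)
    (h2 : (((k + j).factorial : ℕ) : ℝ) = F2)
    (h3 : ((j.factorial : ℕ) : ℝ) = F3)
    (h4 : ((k.factorial : ℕ) : ℝ) = F4) :
    (PP μ N).coeff k = s * q * (F1 / (F2 * F3 * F4)) := by
  subst hN
  rw [coeff_PPQ, hq, hs, h1, h2, h3, h4]

lemma keyP (μ : ℝ) (n : ℕ) :
    Polynomial.C (((n:ℝ)+1) * ((n:ℝ)+2)) * PP μ (n+2)
    + Polynomial.C (((n:ℝ)+1) * (2*(n:ℝ)+3)) * (PP μ (n+1) * Polynomial.X ^ 1)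
    - Polynomial.C (((n:ℝ)+1) * (4*(n:ℝ)+6)) * PP μ (n+1)
    + Polynomial.C (((n:ℝ)+1)^2 - μ^2) * (PP μ n * Polynomial.X ^ 2) = 0 := by
  apply Polynomial.ext
  intro m
  simp only [Polynomial.coeff_add, Polynomial.coeff_sub, Polynomial.coeff_C_mul,
    Polynomial.coeff_mul_X_pow', Polynomial.coeff_zero]
  match m with
  | 0 =>
    rw [if_neg (by omega), if_neg (by omega)]
    have hA : (PP μ (n+2)).coeff 0 = 1 * 1 *
        (((2*(n:ℝ)+4)*(2*(n:ℝ)+3)*(2*(n:ℝ)+2)*(2*(n:ℝ)+1)*((2*n).factorial : ℝ)) /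
          ((((n:ℝ)+2)*((n:ℝ)+1)*(n.factorial : ℝ)) * (((n:ℝ)+2)*((n:ℝ)+1)*(n.factorial : ℝ)) * 1)) := by
      refine coeff_PP_eq μ (n+2) 0 (n+2) (by omega) _ _ _ _ _ _ (pow_zero _) (Q_zero _) ?_ ?_ ?_ (by norm_num)
      · rw [show 0+2*(n+2) = 2*n+1+1+1+1 by omega, fs, fs, fs, fs]; push_cast; ring
      · rw [show 0+(n+2) = n+1+1 by omega, fs, fs]; push_cast; ring
      · rw [show n+2 = n+1+1 by omega, fs, fs]; push_cast; ring
    have hB : (PP μ (n+1)).coeff 0 = 1 * 1 *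
        (((2*(n:ℝ)+2)*(2*(n:ℝ)+1)*((2*n).factorial : ℝ)) /
          ((((n:ℝ)+1)*(n.factorial : ℝ)) * (((n:ℝ)+1)*(n.factorial : ℝ)) * 1)) := by
      refine coeff_PP_eq μ (n+1) 0 (n+1) (by omega) _ _ _ _ _ _ (pow_zero _) (Q_zero _) ?_ ?_ ?_ (by norm_num)
      · rw [show 0+2*(n+1) = 2*n+1+1 by omega, fs, fs]; push_cast; ring
      · rw [show 0+(n+1) = n+1 by omega, fs]
      · rw [fs]
    rw [hA, hB]
    have f1 : ((2*n).factorial : ℝ) ≠ 0 := by positivity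
    have f2 : (n.factorial : ℝ) ≠ 0 := by positivity
    have g1 : ((n:ℝ)+1) ≠ 0 := by positivity
    have g2 : ((n:ℝ)+2) ≠ 0 := by positivity
    field_simp
    ring
  | 1 =>
    rw [if_pos (by omega), if_neg (by omega), show 1-1 = 0 by omega]
    have hA : (PP μ (n+2)).coeff 1 = (-1) * (μ+(n:ℝ)+2) *
        (((2*(n:ℝ)+3)*(2*(n:ℝ)+2)*(2*(n:ℝ)+1)*((2*n).factorial : ℝ)) /
          ((((n:ℝ)+2)*((n:ℝ)+1)*(n.factorial : ℝ)) * (((n:ℝ)+1)*(n.factorial : ℝ)) * 1)) := by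
      refine coeff_PP_eq μ (n+2) 1 (n+1) (by omega) _ _ _ _ _ _ (by norm_num) ?_ ?_ ?_ ?_ (by norm_num)
      · rw [Q_one]; push_cast; ring
      · rw [show 1+2*(n+1) = 2*n+1+1+1 by omega, fs, fs, fs]; push_cast; ring
      · rw [show 1+(n+1) = n+1+1 by omega, fs, fs]; push_cast; ring
      · rw [fs]
    have hB : (PP μ (n+1)).coeff 0 = 1 * 1 *
        (((2*(n:ℝ)+2)*(2*(n:ℝ)+1)*((2*n).factorial : ℝ)) /
          ((((n:ℝ)+1)*(n.factorial : ℝ)) * (((n:ℝ)+1)*(n.factorial : ℝ)) * 1)) := by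
      refine coeff_PP_eq μ (n+1) 0 (n+1) (by omega) _ _ _ _ _ _ (pow_zero _) (Q_zero _) ?_ ?_ ?_ (by norm_num)
      · rw [show 0+2*(n+1) = 2*n+1+1 by omega, fs, fs]; push_cast; ring
      · rw [show 0+(n+1) = n+1 by omega, fs]
      · rw [fs]
    have hC : (PP μ (n+1)).coeff 1 = (-1) * (μ+(n:ℝ)+1) *
        (((2*(n:ℝ)+1)*((2*n).factorial : ℝ)) /
          ((((n:ℝ)+1)*(n.factorial : ℝ)) * (n.factorial : ℝ) * 1)) := by
      refine coeff_PP_eq μ (n+1) 1 n (by omega) _ _ _ _ _ _ (by norm_num) ?_ ?_ ?_ rfl (by norm_num)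
      · rw [Q_one]; push_cast; ring
      · rw [show 1+2*n = 2*n+1 by omega, fs]; push_cast; ring
      · rw [show 1+n = n+1 by omega, fs]
    rw [hA, hB, hC]
    have f1 : ((2*n).factorial : ℝ) ≠ 0 := by positivity
    have f2 : (n.factorial : ℝ) ≠ 0 := by positivity
    have g1 : ((n:ℝ)+1) ≠ 0 := by positivity
    have g2 : ((n:ℝ)+2) ≠ 0 := by positivity
    field_simp
    ring
  | (m+2) =>
    rw [if_pos (by omega), if_pos (by omega), show m+2-1 = m+1 by omega,
      show m+2-2 = m by omega]
    rcases le_or_gt m n with hmn | hmn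
    · obtain ⟨p, rfl⟩ := Nat.exists_eq_add_of_le hmn
      match p with
      | 0 =>
        push_cast
        have hA : (PP μ (m+0+2)).coeff (m+2) = ((-1:ℝ)^m) *
            ((μ+(m:ℝ)+2) * ((μ+(m:ℝ)+2) - 1) * Q (μ+(m:ℝ)) m) *
            ((((m:ℝ)+2)*((m:ℝ)+1)*(m.factorial : ℝ)) /
              ((((m:ℝ)+2)*((m:ℝ)+1)*(m.factorial : ℝ)) * 1 *
                (((m:ℝ)+2)*((m:ℝ)+1)*(m.factorial : ℝ)))) := by
          refine coeff_PP_eq μ (m+0+2) (m+2) 0 (by omega) _ _ _ _ _ _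
            (by rw [pow_add]; norm_num) ?_ ?_ ?_ (by norm_num) ?_
          · rw [show (μ + ((m+2:ℕ):ℝ) + ((0:ℕ):ℝ)) = μ+(m:ℝ)+2 by push_cast; ring]
            exact Q_split2 _ _ m (by ring)
          · rw [show m+2+2*0 = m+1+1 by omega, fs, fs]; push_cast; ring
          · rw [show m+2+0 = m+1+1 by omega, fs, fs]; push_cast; ring
          · rw [show m+2 = m+1+1 by omega, fs, fs]; push_cast; ring
        have hB : (PP μ (m+0+1)).coeff (m+1) = (-((-1:ℝ)^m)) *
            ((μ+(m:ℝ)+1) * Q (μ+(m:ℝ)) m) *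
            ((((m:ℝ)+1)*(m.factorial : ℝ)) /
              ((((m:ℝ)+1)*(m.factorial : ℝ)) * 1 * (((m:ℝ)+1)*(m.factorial : ℝ)))) := by
          refine coeff_PP_eq μ (m+0+1) (m+1) 0 (by omega) _ _ _ _ _ _
            (by rw [pow_succ]; ring) ?_ ?_ ?_ (by norm_num) ?_
          · rw [show (μ + ((m+1:ℕ):ℝ) + ((0:ℕ):ℝ)) = μ+(m:ℝ)+1 by push_cast; ring]
            exact Q_split1 _ _ m (by ring)
          · rw [show m+1+2*0 = m+1 by omega, fs]
          · rw [show m+1+0 = m+1 by omega, fs]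
          · rw [fs]
        have hC : (PP μ (m+0+1)).coeff (m+2) = 0 := coeff_PP_zero _ _ _ (by omega)
        have hD : (PP μ (m+0)).coeff m = ((-1:ℝ)^m) * (Q (μ+(m:ℝ)) m) *
            ((m.factorial : ℝ) / ((m.factorial : ℝ) * 1 * (m.factorial : ℝ))) := by
          refine coeff_PP_eq μ (m+0) m 0 (by omega) _ _ _ _ _ _ rfl ?_ ?_ ?_
            (by norm_num) rfl
          · rw [show (μ + ((m:ℕ):ℝ) + ((0:ℕ):ℝ)) = μ+(m:ℝ) by push_cast; ring]
          · rw [show m+2*0 = m by omega]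
          · rw [show m+0 = m by omega]
        rw [hA, hB, hC, hD]
        have f1 : (m.factorial : ℝ) ≠ 0 := by positivity
        have g1 : ((m:ℝ)+1) ≠ 0 := by positivity
        have g2 : ((m:ℝ)+2) ≠ 0 := by positivity
        field_simp
        ring
      | (p+1) =>
        push_cast
        have hA : (PP μ (m+(p+1)+2)).coeff (m+2) = ((-1:ℝ)^m) *
            ((μ+(m:ℝ)+(p:ℝ)+3) * ((μ+(m:ℝ)+(p:ℝ)+3) - 1) * Q (μ+(m:ℝ)+(p:ℝ)+1) m) *
            ((((m:ℝ)+2*(p:ℝ)+4)*((m:ℝ)+2*(p:ℝ)+3)*((m+2*p+2).factorial : ℝ)) /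
              ((((m:ℝ)+(p:ℝ)+3)*((m:ℝ)+(p:ℝ)+2)*((m+p+1).factorial : ℝ)) *
                (((p:ℝ)+1)*(p.factorial : ℝ)) *
                (((m:ℝ)+2)*((m:ℝ)+1)*(m.factorial : ℝ)))) := by
          refine coeff_PP_eq μ (m+(p+1)+2) (m+2) (p+1) (by omega) _ _ _ _ _ _
            (by rw [pow_add]; norm_num) ?_ ?_ ?_ ?_ ?_
          · rw [show (μ + ((m+2:ℕ):ℝ) + ((p+1:ℕ):ℝ)) = μ+(m:ℝ)+(p:ℝ)+3 by push_cast; ring]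
            exact Q_split2 _ _ m (by ring)
          · rw [show m+2+2*(p+1) = m+2*p+2+1+1 by omega, fs, fs]; push_cast; ring
          · rw [show m+2+(p+1) = m+p+1+1+1 by omega, fs, fs]; push_cast; ring
          · rw [fs]
          · rw [show m+2 = m+1+1 by omega, fs, fs]; push_cast; ring
        have hB : (PP μ (m+(p+1)+1)).coeff (m+1) = (-((-1:ℝ)^m)) *
            ((μ+(m:ℝ)+(p:ℝ)+2) * Q (μ+(m:ℝ)+(p:ℝ)+1) m) *
            ((((m:ℝ)+2*(p:ℝ)+3)*((m+2*p+2).factorial : ℝ)) /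
              ((((m:ℝ)+(p:ℝ)+2)*((m+p+1).factorial : ℝ)) *
                (((p:ℝ)+1)*(p.factorial : ℝ)) *
                (((m:ℝ)+1)*(m.factorial : ℝ)))) := by
          refine coeff_PP_eq μ (m+(p+1)+1) (m+1) (p+1) (by omega) _ _ _ _ _ _
            (by rw [pow_succ]; ring) ?_ ?_ ?_ ?_ ?_
          · rw [show (μ + ((m+1:ℕ):ℝ) + ((p+1:ℕ):ℝ)) = μ+(m:ℝ)+(p:ℝ)+2 by push_cast; ring]
            exact Q_split1 _ _ m (by ring)
          · rw [show m+1+2*(p+1) = m+2*p+2+1 by omega, fs]; push_cast; ring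
          · rw [show m+1+(p+1) = m+p+1+1 by omega, fs]; push_cast; ring
          · rw [fs]
          · rw [fs]
        have hC : (PP μ (m+(p+1)+1)).coeff (m+2) = ((-1:ℝ)^m) *
            ((μ+(m:ℝ)+(p:ℝ)+2) * Q (μ+(m:ℝ)+(p:ℝ)+1) m * ((μ+(m:ℝ)+(p:ℝ)+1) - (m:ℝ))) *
            (((m+2*p+2).factorial : ℝ) /
              ((((m:ℝ)+(p:ℝ)+2)*((m+p+1).factorial : ℝ)) * (p.factorial : ℝ) *
                (((m:ℝ)+2)*((m:ℝ)+1)*(m.factorial : ℝ)))) := by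
          refine coeff_PP_eq μ (m+(p+1)+1) (m+2) p (by omega) _ _ _ _ _ _
            (by rw [pow_add]; norm_num) ?_ ?_ ?_ rfl ?_
          · rw [show (μ + ((m+2:ℕ):ℝ) + ((p:ℕ):ℝ)) = μ+(m:ℝ)+(p:ℝ)+2 by push_cast; ring]
            exact Q_mid _ _ m (by ring)
          · rw [show m+2+2*p = m+2*p+2 by omega]
          · rw [show m+2+p = m+p+1+1 by omega, fs]; push_cast; ring
          · rw [show m+2 = m+1+1 by omega, fs, fs]; push_cast; ring
        have hD : (PP μ (m+(p+1))).coeff m = ((-1:ℝ)^m) * (Q (μ+(m:ℝ)+(p:ℝ)+1) m) *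
            (((m+2*p+2).factorial : ℝ) /
              (((m+p+1).factorial : ℝ) * (((p:ℝ)+1)*(p.factorial : ℝ)) *
                (m.factorial : ℝ))) := by
          refine coeff_PP_eq μ (m+(p+1)) m (p+1) (by omega) _ _ _ _ _ _
            rfl ?_ ?_ ?_ ?_ rfl
          · rw [show (μ + ((m:ℕ):ℝ) + ((p+1:ℕ):ℝ)) = μ+(m:ℝ)+(p:ℝ)+1 by push_cast; ring]
          · rw [show m+2*(p+1) = m+2*p+2 by omega]
          · rw [show m+(p+1) = m+p+1 by omega]
          · rw [fs]
        rw [hA, hB, hC, hD]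
        have f1 : (m.factorial : ℝ) ≠ 0 := by positivity
        have f2 : (p.factorial : ℝ) ≠ 0 := by positivity
        have f3 : ((m+p+1).factorial : ℝ) ≠ 0 := by positivity
        have g1 : ((m:ℝ)+1) ≠ 0 := by positivity
        have g2 : ((m:ℝ)+2) ≠ 0 := by positivity
        have g3 : ((p:ℝ)+1) ≠ 0 := by positivity
        have g4 : ((m:ℝ)+(p:ℝ)+2) ≠ 0 := by positivity
        have g5 : ((m:ℝ)+(p:ℝ)+3) ≠ 0 := by positivity
        field_simp
        ring
    · rw [coeff_PP_zero μ (n+2) (m+2) (by omega), coeff_PP_zero μ (n+1) (m+1) (by omega),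
        coeff_PP_zero μ (n+1) (m+2) (by omega), coeff_PP_zero μ n m (by omega)]
      ring

lemma coeff_Aseries (μ : ℝ) (k : ℕ) :
    (PowerSeries.coeff k) (Aseries μ) = PP μ k := by
  simp [Aseries, PP, PowerSeries.coeff_mk]

lemma coeff_derivativeFun' (f : (Polynomial ℝ)⟦X⟧) (n : ℕ) :
    PowerSeries.coeff n f.derivativeFun = PowerSeries.coeff (n + 1) f * (n + 1) :=
  PowerSeries.coeff_derivative f n

lemma mainODE (μ ν : ℝ) (h : Polynomial.C μ ^ 2 = Polynomial.C ν ^ 2) :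
    (1 - 4 * PowerSeries.X + 2 * PowerSeries.C (R := Polynomial ℝ) Polynomial.X * PowerSeries.X
          + PowerSeries.C (R := Polynomial ℝ) (Polynomial.X ^ 2) * PowerSeries.X ^ 2) *
        PowerSeries.derivativeFun (PowerSeries.derivativeFun (Aseries μ)) +
      3 * (PowerSeries.C (R := Polynomial ℝ) (Polynomial.X ^ 2) * PowerSeries.X
          + PowerSeries.C (R := Polynomial ℝ) Polynomial.X - 2) *
        PowerSeries.derivativeFun (Aseries μ) +
      PowerSeries.C (R := Polynomial ℝ)
          (Polynomial.X ^ 2 * Polynomial.C (1 - ν ^ 2)) * Aseries μ = 0 := by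
  have E : ∀ f g : (Polynomial ℝ)⟦X⟧,
      (1 - 4 * PowerSeries.X + 2 * PowerSeries.C (R := Polynomial ℝ) Polynomial.X * PowerSeries.X
          + PowerSeries.C (R := Polynomial ℝ) (Polynomial.X ^ 2) * PowerSeries.X ^ 2) * g +
        3 * (PowerSeries.C (R := Polynomial ℝ) (Polynomial.X ^ 2) * PowerSeries.X
          + PowerSeries.C (R := Polynomial ℝ) Polynomial.X - 2) * f +
        PowerSeries.C (R := Polynomial ℝ) (Polynomial.X ^ 2 * Polynomial.C (1 - ν ^ 2)) * Aseries μ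
      = g - PowerSeries.C (R := Polynomial ℝ) 4 * (PowerSeries.X ^ 1 * g)
        + PowerSeries.C (R := Polynomial ℝ) (2 * Polynomial.X) * (PowerSeries.X ^ 1 * g)
        + PowerSeries.C (R := Polynomial ℝ) (Polynomial.X ^ 2) * (PowerSeries.X ^ 2 * g)
        + PowerSeries.C (R := Polynomial ℝ) (3 * Polynomial.X ^ 2) * (PowerSeries.X ^ 1 * f)
        + PowerSeries.C (R := Polynomial ℝ) (3 * Polynomial.X) * f
        - PowerSeries.C (R := Polynomial ℝ) 6 * f
        + PowerSeries.C (R := Polynomial ℝ) (Polynomial.X ^ 2 * Polynomial.C (1 - ν ^ 2)) * Aseries μ := by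
    intro f g
    simp only [map_mul, map_pow, map_ofNat]
    ring
  rw [E (PowerSeries.derivativeFun (Aseries μ))
      (PowerSeries.derivativeFun (PowerSeries.derivativeFun (Aseries μ)))]
  apply PowerSeries.ext
  intro k
  simp only [map_add, map_sub, map_zero, PowerSeries.coeff_C_mul,
    PowerSeries.coeff_X_pow_mul', coeff_derivativeFun', coeff_Aseries]
  match k with
  | 0 =>
    have key := keyP μ 0
    norm_num at key ⊢
    simp only [map_mul, map_add, map_sub, map_pow, map_one, map_ofNat,
      Polynomial.C_eq_natCast] at key ⊢
    linear_combination key + Polynomial.X^2 * PP μ 0 * h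
  | 1 =>
    have key := keyP μ 1
    norm_num at key ⊢
    simp only [map_mul, map_add, map_sub, map_pow, map_one, map_ofNat,
      Polynomial.C_eq_natCast] at key ⊢
    linear_combination key + Polynomial.X^2 * PP μ 1 * h
  | (k+2) =>
    rw [show k+2-1 = k+1 by omega, show k+2-2 = k by omega,
      show k+2+1+1 = k+4 by omega, show k+1+1+1 = k+3 by omega,
      show k+1+1 = k+2 by omega, show k+2+1 = k+3 by omega]
    have key := keyP μ (k+2)
    rw [show k+2+2 = k+4 by omega, show k+2+1 = k+3 by omega] at key
    push_cast at key ⊢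
    simp only [map_mul, map_add, map_sub, map_pow, map_one, map_ofNat,
      Polynomial.C_eq_natCast] at key ⊢
    linear_combination key + Polynomial.X^2 * PP μ (k+2) * h

theorem stmt_4 (ν : ℝ) (ε : ℝ) (hε : ε = 1 ∨ ε = -1) :
    (1 - 4 * PowerSeries.X + 2 * PowerSeries.C (R := Polynomial ℝ) Polynomial.X * PowerSeries.X
          + PowerSeries.C (R := Polynomial ℝ) (Polynomial.X ^ 2) * PowerSeries.X ^ 2) *
        PowerSeries.derivativeFun (PowerSeries.derivativeFun (Aseries (ε * ν))) +
      3 * (PowerSeries.C (R := Polynomial ℝ) (Polynomial.X ^ 2) * PowerSeries.X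
          + PowerSeries.C (R := Polynomial ℝ) Polynomial.X - 2) *
        PowerSeries.derivativeFun (Aseries (ε * ν)) +
      PowerSeries.C (R := Polynomial ℝ)
          (Polynomial.X ^ 2 * Polynomial.C (1 - ν ^ 2)) * Aseries (ε * ν) = 0 := by
  apply mainODE (ε * ν) ν
  have hsq : (ε * ν)^2 = ν^2 := by rcases hε with rfl | rfl <;> ring
  rw [← map_pow, ← map_pow, hsq]
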